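/- Let μ > 0, a < b, r < a, and p ∈ (0,1). The function f(p) := (1 − e^{−μ(b−a)})^{-1} · (p(1−p) e^{−μ(a−r)p})^{-1} on (0,1) attains its global minimum at p_opt = 2 / (2 + μ(a−r) + √(4 + μ²(a−r)²)). -/

import Mathlib

open Real

private lemma gmax (c : ℝ) (hc : 0 < c) :
    (2 / (2 + c + Real.sqrt (4 + c ^ 2))) ∈ Set.Ioo (0:ℝ) 1 ∧
    ∀ p ∈ Set.Ioo (0:ℝ) 1,
      p * (1 - p) * Real.exp (-(c * p)) ≤
        (2 / (2 + c + Real.sqrt (4 + c ^ 2))) *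
          (1 - 2 / (2 + c + Real.sqrt (4 + c ^ 2))) *
          Real.exp (-(c * (2 / (2 + c + Real.sqrt (4 + c ^ 2))))) := by
  set s := Real.sqrt (4 + c ^ 2) with hs_def
  have hs2 : s ^ 2 = 4 + c ^ 2 := Real.sq_sqrt (by positivity)
  have hs : 0 < s := Real.sqrt_pos.mpr (by positivity)
  have hd : (0:ℝ) < 2 + c + s := by linarith
  set P : ℝ := 2 / (2 + c + s) with hP_def
  have hP0 : 0 < P := by positivity
  have hP1 : P < 1 := by
    rw [hP_def, div_lt_one hd]; linarith
  have hroot : c * P ^ 2 - (c + 2) * P + 1 = 0 := by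
    rw [hP_def]
    field_simp
    ring_nf
    nlinarith [hs2]
  have hcP : c * P < 2 := by
    have h : c * P = 2 * c / (2 + c + s) := by rw [hP_def]; ring
    rw [h, div_lt_iff₀ hd]; nlinarith
  -- derivative
  have hderiv : ∀ p : ℝ, HasDerivAt (fun p => p * (1 - p) * Real.exp (-(c * p)))
      (Real.exp (-(c * p)) * (c * p ^ 2 - (c + 2) * p + 1)) p := by
    intro p
    have h1 : HasDerivAt (fun p : ℝ => p * (1 - p)) (1 - 2 * p) p := by
      have := (hasDerivAt_id p).fun_mul ((hasDerivAt_const p (1:ℝ)).fun_sub (hasDerivAt_id p))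
      exact this.congr_deriv (by simp only [id_eq]; ring)
    have h2 : HasDerivAt (fun p : ℝ => Real.exp (-(c * p))) (Real.exp (-(c * p)) * (-c)) p := by
      have := (((hasDerivAt_id p).const_mul c).neg).exp
      simpa using this
    have := h1.fun_mul h2
    exact this.congr_deriv (by ring)
  have hquad : ∀ p : ℝ, c * p ^ 2 - (c + 2) * p + 1 = (p - P) * (c * p + c * P - c - 2) := by
    intro p; nlinarith [hroot]
  have mono : MonotoneOn (fun p => p * (1 - p) * Real.exp (-(c * p))) (Set.Icc 0 P) := by
    apply monotoneOn_of_deriv_nonneg (convex_Icc 0 P)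
    · exact (Continuous.continuousOn (by continuity))
    · intro x hx; exact ((hderiv x).differentiableAt).differentiableWithinAt
    · intro x hx
      rw [interior_Icc] at hx
      rw [(hderiv x).deriv]
      have h1 : (0:ℝ) ≤ Real.exp (-(c * x)) := (Real.exp_pos _).le
      have h2 : 0 ≤ c * x ^ 2 - (c + 2) * x + 1 := by
        rw [hquad]
        have hx1 : x < P := hx.2
        have hx0 : 0 < x := hx.1
        have cx : c * x < c * P := by nlinarith
        have f2 : c * x + c * P - c - 2 < 0 := by nlinarith
        nlinarith [mul_nonneg (by linarith : (0:ℝ) ≤ P - x)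
          (by linarith : (0:ℝ) ≤ -(c * x + c * P - c - 2))]
      positivity
  have anti : AntitoneOn (fun p => p * (1 - p) * Real.exp (-(c * p))) (Set.Icc P 1) := by
    apply antitoneOn_of_deriv_nonpos (convex_Icc P 1)
    · exact (Continuous.continuousOn (by continuity))
    · intro x hx; exact ((hderiv x).differentiableAt).differentiableWithinAt
    · intro x hx
      rw [interior_Icc] at hx
      rw [(hderiv x).deriv]
      have h1 : (0:ℝ) ≤ Real.exp (-(c * x)) := (Real.exp_pos _).le
      have h2 : c * x ^ 2 - (c + 2) * x + 1 ≤ 0 := by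
        rw [hquad]
        have hx1 : x < 1 := hx.2
        have hx0 : P < x := hx.1
        have cx : c * x < c := by nlinarith
        have f2 : c * x + c * P - c - 2 < 0 := by linarith
        nlinarith [mul_nonneg (by linarith : (0:ℝ) ≤ x - P)
          (by linarith : (0:ℝ) ≤ -(c * x + c * P - c - 2))]
      exact mul_nonpos_of_nonneg_of_nonpos h1 h2
  refine ⟨⟨hP0, hP1⟩, ?_⟩
  intro p hp
  rcases le_total p P with h | h
  · exact mono ⟨hp.1.le, h⟩ ⟨hP0.le, le_refl P⟩ h
  · exact anti ⟨le_refl P, hP1.le⟩ ⟨h, hp.2.le⟩ h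

theorem stmt14 (μ a b r : ℝ) (hμ : 0 < μ) (hab : a < b) (hr : r < a) :
    (2 / (2 + μ * (a - r) + Real.sqrt (4 + μ ^ 2 * (a - r) ^ 2))) ∈
      Set.Ioo (0 : ℝ) 1 ∧
    ∀ p ∈ Set.Ioo (0 : ℝ) 1,
      (1 - Real.exp (-μ * (b - a)))⁻¹ *
        ((2 / (2 + μ * (a - r) + Real.sqrt (4 + μ ^ 2 * (a - r) ^ 2))) *
          (1 - 2 / (2 + μ * (a - r) + Real.sqrt (4 + μ ^ 2 * (a - r) ^ 2))) *
          Real.exp (-μ * (a - r) *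
            (2 / (2 + μ * (a - r) + Real.sqrt (4 + μ ^ 2 * (a - r) ^ 2)))))⁻¹
      ≤ (1 - Real.exp (-μ * (b - a)))⁻¹ *
          (p * (1 - p) * Real.exp (-μ * (a - r) * p))⁻¹ := by
  set c : ℝ := μ * (a - r) with hc_def
  have hc : 0 < c := by
    have : 0 < a - r := by linarith
    positivity
  have hsqrt : Real.sqrt (4 + μ ^ 2 * (a - r) ^ 2) = Real.sqrt (4 + c ^ 2) := by
    rw [hc_def]; ring_nf
  obtain ⟨hmem, hmax⟩ := gmax c hc
  rw [hsqrt]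
  refine ⟨hmem, ?_⟩
  intro p hp
  set P : ℝ := 2 / (2 + c + Real.sqrt (4 + c ^ 2)) with hP_def
  have hA : 0 < (1 - Real.exp (-μ * (b - a)))⁻¹ := by
    have : Real.exp (-μ * (b - a)) < 1 := by
      rw [Real.exp_lt_one_iff]; nlinarith
    exact inv_pos.mpr (by linarith)
  have hgp : 0 < p * (1 - p) * Real.exp (-μ * (a - r) * p) := by
    have h1 := hp.1; have h2 := hp.2
    have : (0:ℝ) < 1 - p := by linarith
    exact mul_pos (mul_pos h1 this) (Real.exp_pos _)
  have key : p * (1 - p) * Real.exp (-μ * (a - r) * p) ≤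
      P * (1 - P) * Real.exp (-μ * (a - r) * P) := by
    have := hmax p hp
    have e1 : -μ * (a - r) * p = -(c * p) := by rw [hc_def]; ring
    have e2 : -μ * (a - r) * P = -(c * P) := by rw [hc_def]; ring
    rw [e1, e2]; exact this
  apply mul_le_mul_of_nonneg_left _ hA.le
  exact inv_anti₀ hgp key
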